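/- Let F_1 and F_2 be finite simple graphs and let s, t be positive integers such that every signed graph in which every triangle is positive and which contains no induced copy of F_1 (in its underlying graph) satisfies χ_b ≤ s, and every signed graph in which every triangle is positive and which contains no induced copy of F_2 satisfies χ_b ≤ t. Then every signed graph in which every triangle is positive and whose underlying graph contains no induced copy of the disjoint union F_1 + F_2 satisfies χ_b ≤ max{s, |V(F_1)| + t}. -/

import Mathlib

open SimpleGraph

namespace SignedGS

variable {V : Type*}

/-- The sign of a walk in a signed graph: the product of the signs of its edges. -/
def walkSign {G : SimpleGraph V} (σ : Sym2 V → ℤˣ) {u v : V} (w : G.Walk u v) : ℤˣ :=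
  (w.edges.map σ).prod

/-- `X` is a balanced set of `(G, σ)`: every cycle of the subgraph induced on `X`
is positive. -/
def IsBalancedSet (G : SimpleGraph V) (σ : Sym2 V → ℤˣ) (X : Set V) : Prop :=
  ∀ ⦃v : V⦄ (w : G.Walk v v), w.IsCycle → (∀ u ∈ w.support, u ∈ X) → walkSign σ w = 1

/-- `(G, σ)` can be covered by `n` balanced sets. -/
def BalancedColorable (G : SimpleGraph V) (σ : Sym2 V → ℤˣ) (n : ℕ) : Prop :=
  ∃ f : V → Fin n, ∀ i : Fin n, IsBalancedSet G σ {v | f v = i}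

/-- The balanced chromatic number of `(G, σ)`. -/
noncomputable def balancedChromNum (G : SimpleGraph V) (σ : Sym2 V → ℤˣ) : ℕ :=
  sInf {n | BalancedColorable G σ n}

/-- The set `X ⊆ V` can be covered by `n` sets each of which is balanced in `(G, σ)`. -/
def BalancedColorableOn (G : SimpleGraph V) (σ : Sym2 V → ℤˣ) (X : Set V) (n : ℕ) : Prop :=
  ∃ f : V → Fin n, ∀ i : Fin n, IsBalancedSet G σ {v | v ∈ X ∧ f v = i}

/-- The balanced chromatic number of the signed subgraph of `(G, σ)` induced on `X`. -/
noncomputable def balancedChromNumOn (G : SimpleGraph V) (σ : Sym2 V → ℤˣ) (X : Set V) : ℕ :=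
  sInf {n | BalancedColorableOn G σ X n}

/-- `(G, σ)⁻` : the spanning subgraph of `G` consisting of the negative edges. -/
def negSubgraph (G : SimpleGraph V) (σ : Sym2 V → ℤˣ) : SimpleGraph V where
  Adj u v := G.Adj u v ∧ σ s(u, v) = -1
  symm := by
    constructor
    intro u v h
    refine ⟨h.1.symm, ?_⟩
    rw [Sym2.eq_swap]
    exact h.2
  loopless := by constructor; intro v h; exact G.loopless.irrefl v h.1

/-- Two signatures on `G` are switching equivalent. -/
def SwitchEquiv (G : SimpleGraph V) (σ σ' : Sym2 V → ℤˣ) : Prop :=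
  ∃ η : V → ℤˣ, ∀ u v : V, G.Adj u v → σ' s(u, v) = η u * σ s(u, v) * η v

/-- Every triangle of `(G, σ)` is positive. -/
def AllTrianglesPositive (G : SimpleGraph V) (σ : Sym2 V → ℤˣ) : Prop :=
  ∀ u v w : V, G.Adj u v → G.Adj v w → G.Adj u w →
    σ s(u, v) * σ s(v, w) * σ s(u, w) = 1

/-- `G` contains an induced copy of `F`. -/
def HasInducedCopy {W : Type*} (F : SimpleGraph W) (G : SimpleGraph V) : Prop :=
  ∃ f : W ↪ V, ∀ a b : W, G.Adj (f a) (f b) ↔ F.Adj a b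

/-- The star `K_{1,m}` with center `0` and `m` leaves. -/
def starGraph (m : ℕ) : SimpleGraph (Fin (m + 1)) where
  Adj a b := (a = 0 ∨ b = 0) ∧ a ≠ b
  symm := by constructor; rintro a b ⟨h1, h2⟩; exact ⟨h1.symm, h2.symm⟩
  loopless := by constructor; rintro a ⟨_, h⟩; exact h rfl

private def disjUnionAdj {W1 W2 : Type*} (F1 : SimpleGraph W1) (F2 : SimpleGraph W2) :
    W1 ⊕ W2 → W1 ⊕ W2 → Prop
  | .inl x, .inl y => F1.Adj x y
  | .inr x, .inr y => F2.Adj x y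
  | _, _ => False

/-- The disjoint union `F1 + F2` of two graphs. -/
def disjUnion {W1 W2 : Type*} (F1 : SimpleGraph W1) (F2 : SimpleGraph W2) :
    SimpleGraph (W1 ⊕ W2) where
  Adj := disjUnionAdj F1 F2
  symm := by
    constructor
    rintro (x | x) (y | y) h
    · exact F1.adj_symm h
    · exact h.elim
    · exact h.elim
    · exact F2.adj_symm h
  loopless := by
    constructor
    rintro (x | x) h
    · exact F1.loopless.irrefl x h
    · exact F2.loopless.irrefl x h

private def fullJoinAdj {W1 W2 : Type*} (G1 : SimpleGraph W1) (G2 : SimpleGraph W2) :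
    W1 ⊕ W2 → W1 ⊕ W2 → Prop
  | .inl x, .inl y => G1.Adj x y
  | .inr x, .inr y => G2.Adj x y
  | _, _ => True

/-- The full join `G1 ⋈ G2` of two vertex-disjoint graphs. -/
def fullJoin {W1 W2 : Type*} (G1 : SimpleGraph W1) (G2 : SimpleGraph W2) :
    SimpleGraph (W1 ⊕ W2) where
  Adj := fullJoinAdj G1 G2
  symm := by
    constructor
    rintro (x | x) (y | y) h
    · exact G1.adj_symm h
    · trivial
    · trivial
    · exact G2.adj_symm h
  loopless := by
    constructor
    rintro (x | x) h
    · exact G1.loopless.irrefl x h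
    · exact G2.loopless.irrefl x h

/-- The linear forest with `l` components, the `i`-th component being a path
on `m i` vertices. -/
def linearForest (l : ℕ) (m : Fin l → ℕ) : SimpleGraph (Σ i : Fin l, Fin (m i)) where
  Adj a b := a.1 = b.1 ∧ ((a.2 : ℕ) + 1 = (b.2 : ℕ) ∨ (b.2 : ℕ) + 1 = (a.2 : ℕ))
  symm := by constructor; rintro a b ⟨h1, h2⟩; exact ⟨h1.symm, h2.symm⟩
  loopless := by constructor; rintro a ⟨_, h⟩; omega

/-- `(G, σ)` has an induced subgraph switching equivalent to the all-negative `K_4`. -/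
def HasSwitchK4Neg (G : SimpleGraph V) (σ : Sym2 V → ℤˣ) : Prop :=
  ∃ f : Fin 4 ↪ V, (∀ a b : Fin 4, a ≠ b → G.Adj (f a) (f b)) ∧
    ∃ η : Fin 4 → ℤˣ, ∀ a b : Fin 4, a ≠ b → η a * σ s(f a, f b) * η b = -1

/-- `(G, σ)` has a triangle all of whose edges are negative. -/
def HasNegTriangle (G : SimpleGraph V) (σ : Sym2 V → ℤˣ) : Prop :=
  ∃ u v w : V, G.Adj u v ∧ G.Adj v w ∧ G.Adj u w ∧
    σ s(u, v) = -1 ∧ σ s(v, w) = -1 ∧ σ s(u, w) = -1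

/-- `(G, σ)` has four vertices inducing a copy of `(K_4, M)`: a complete graph on four
vertices whose negative edges form a perfect matching. -/
def HasK4M (G : SimpleGraph V) (σ : Sym2 V → ℤˣ) : Prop :=
  ∃ a b c d : V, a ≠ b ∧ a ≠ c ∧ a ≠ d ∧ b ≠ c ∧ b ≠ d ∧ c ≠ d ∧
    G.Adj a b ∧ G.Adj a c ∧ G.Adj a d ∧ G.Adj b c ∧ G.Adj b d ∧ G.Adj c d ∧
    σ s(a, b) = -1 ∧ σ s(c, d) = -1 ∧
    σ s(a, c) = 1 ∧ σ s(a, d) = 1 ∧ σ s(b, c) = 1 ∧ σ s(b, d) = 1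

/-- The vertices of the shift graph `S_{k,n}`: strictly increasing `k`-sequences
with values in `{1, …, n}`. -/
def ShiftVertex (k n : ℕ) : Type :=
  {s : Fin k → ℕ // StrictMono s ∧ ∀ i, s i ∈ Finset.Icc 1 n}

/-- `b` is obtained from `a` by shifting: `b = (a_2, …, a_k, t)` for some `t`. -/
def ShiftFollows {k n : ℕ} (a b : ShiftVertex k n) : Prop :=
  ∀ (i : ℕ) (h : i + 1 < k), b.1 ⟨i, Nat.lt_of_succ_lt h⟩ = a.1 ⟨i + 1, h⟩

/-- The shift graph `S_{k,n}`. -/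
def shiftGraph (k n : ℕ) : SimpleGraph (ShiftVertex k n) where
  Adj a b := a ≠ b ∧ (ShiftFollows a b ∨ ShiftFollows b a)
  symm := by constructor; rintro a b ⟨h1, h2⟩; exact ⟨h1.symm, h2.symm⟩
  loopless := by constructor; rintro a ⟨h, _⟩; exact h rfl



section Aux

private lemma units_sq (x : ℤˣ) : x * x = 1 := by
  rcases Int.units_eq_one_or x with h | h <;> simp [h]

lemma isBalancedSet_mono {G : SimpleGraph V} {σ : Sym2 V → ℤˣ} {X Y : Set V}
    (hXY : X ⊆ Y) (hY : IsBalancedSet G σ Y) : IsBalancedSet G σ X :=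
  fun _ w hc hs => hY w hc (fun u hu => hXY (hs u hu))

lemma balancedColorable_mono {G : SimpleGraph V} {σ : Sym2 V → ℤˣ} {m n : ℕ}
    (h : BalancedColorable G σ m) (hmn : m ≤ n) : BalancedColorable G σ n := by
  obtain ⟨f, hf⟩ := h
  refine ⟨fun v => Fin.castLE hmn (f v), fun i => ?_⟩
  by_cases hi : (i : ℕ) < m
  · have hset : {v | Fin.castLE hmn (f v) = i} = {v | f v = ⟨(i : ℕ), hi⟩} := by
      ext v
      simp [Fin.ext_iff]
    rw [hset]; exact hf _
  · intro v w hc hs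
    have := hs v w.start_mem_support
    simp only [Set.mem_setOf_eq] at this
    exact absurd (by rw [← this]; simpa using (f v).isLt : (i : ℕ) < m) hi

lemma balancedColorable_card [Fintype V] (G : SimpleGraph V) (σ : Sym2 V → ℤˣ) :
    BalancedColorable G σ (Fintype.card V) := by
  refine ⟨Fintype.equivFin V, fun i v w hc hs => ?_⟩
  exfalso
  obtain ⟨x, hadj, q, rfl⟩ := (SimpleGraph.Walk.not_nil_iff).mp hc.not_nil
  have h1 := hs v ((Walk.cons hadj q).start_mem_support)
  have h2 := hs x (by simp)
  simp only [Set.mem_setOf_eq] at h1 h2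
  exact hadj.ne ((Fintype.equivFin V).injective (h1.trans h2.symm))

lemma balancedColorable_of_le [Fintype V] (G : SimpleGraph V) (σ : Sym2 V → ℤˣ) {k : ℕ}
    (h : balancedChromNum G σ ≤ k) : BalancedColorable G σ k := by
  have hne : {n | BalancedColorable G σ n}.Nonempty := ⟨_, balancedColorable_card G σ⟩
  exact balancedColorable_mono (Nat.sInf_mem hne) h

lemma walkSign_eta {G : SimpleGraph V} (σ : Sym2 V → ℤˣ) (η : V → ℤˣ) (X : Set V)
    (h : ∀ x y, G.Adj x y → x ∈ X → y ∈ X → σ s(x, y) = η x * η y) :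
    ∀ {u v : V} (w : G.Walk u v), (∀ x ∈ w.support, x ∈ X) → walkSign σ w = η u * η v := by
  intro u v w
  induction w with
  | nil => intro _; simp [walkSign, units_sq]
  | @cons u x v a p ih =>
    intro hsup
    have hx : σ s(u, x) = η u * η x :=
      h u x a (hsup u (by simp)) (hsup x (by simp))
    have hp := ih (fun z hz => hsup z (by simp [hz]))
    simp only [walkSign, Walk.edges_cons, List.map_cons, List.prod_cons] at hp ⊢
    rw [hx, hp, mul_assoc, ← mul_assoc (η x), units_sq, one_mul]

lemma closedNbhd_balanced {G : SimpleGraph V} {σ : Sym2 V → ℤˣ}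
    (hpos : AllTrianglesPositive G σ) (a : V) :
    IsBalancedSet G σ {v | v = a ∨ G.Adj a v} := by
  classical
  set η : V → ℤˣ := fun v => if G.Adj a v then σ s(a, v) else 1 with hη
  have key : ∀ x y, G.Adj x y → x ∈ {v | v = a ∨ G.Adj a v} → y ∈ {v | v = a ∨ G.Adj a v} →
      σ s(x, y) = η x * η y := by
    intro x y hxy hx hy
    simp only [Set.mem_setOf_eq] at hx hy
    rcases hx with rfl | hax
    · rcases hy with rfl | hay
      · exact absurd hxy (G.loopless.irrefl _)
      · simp [hη, hay, G.irrefl]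
    · rcases hy with rfl | hay
      · have hsw : s(x, y) = s(y, x) := Sym2.eq_swap
        simp [hη, hsw, hax, G.irrefl]
      · have ht := hpos a x y hax hxy hay
        have hsw : s(x, a) = s(a, x) := Sym2.eq_swap
        simp only [hη, hax, hay, if_pos]
        rcases Int.units_eq_one_or (σ s(a, x)) with h1 | h1 <;>
          rcases Int.units_eq_one_or (σ s(x, y)) with h2 | h2 <;>
          rcases Int.units_eq_one_or (σ s(a, y)) with h3 | h3 <;>
          simp_all
  intro u w hc hsup
  have := walkSign_eta σ η _ key w hsup
  rw [this, units_sq]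

variable {R : Set V} {G : SimpleGraph V}

/-- Lift a walk contained in `R` to the induced subgraph on `R`. -/
def liftWalk : ∀ {u v : V} (w : G.Walk u v) (h : ∀ x ∈ w.support, x ∈ R),
    (G.induce R).Walk ⟨u, h u w.start_mem_support⟩ ⟨v, h v w.end_mem_support⟩
  | _, _, .nil, _ => .nil
  | _, _, .cons a p, h =>
      .cons (by exact a) (liftWalk p (fun x hx => h x (by simp [hx])))

lemma liftWalk_support : ∀ {u v : V} (w : G.Walk u v) (h : ∀ x ∈ w.support, x ∈ R),
    (liftWalk w h).support.map Subtype.val = w.support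
  | _, _, .nil, _ => rfl
  | _, _, .cons a p, h => by
      simp only [liftWalk, Walk.support_cons, List.map_cons, liftWalk_support p]
      exact congrArg (_ :: ·) (liftWalk_support p _)

lemma liftWalk_edges : ∀ {u v : V} (w : G.Walk u v) (h : ∀ x ∈ w.support, x ∈ R),
    (liftWalk w h).edges.map (Sym2.map Subtype.val) = w.edges
  | _, _, .nil, _ => rfl
  | _, _, .cons a p, h => by
      simp only [liftWalk, Walk.edges_cons, List.map_cons, liftWalk_edges p,
        Sym2.map_pair_eq]
      exact congrArg (_ :: ·) (liftWalk_edges p _)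

lemma liftWalk_isCycle {u : V} (w : G.Walk u u) (h : ∀ x ∈ w.support, x ∈ R)
    (hc : w.IsCycle) : (liftWalk w h).IsCycle := by
  rw [Walk.isCycle_def]
  refine ⟨?_, ?_, ?_⟩
  · rw [Walk.isTrail_def]
    refine List.Nodup.of_map (Sym2.map Subtype.val) ?_
    rw [liftWalk_edges]
    exact hc.isTrail.edges_nodup
  · intro hnil
    have h3 := hc.three_le_length
    have hlen : (liftWalk w h).length = w.length := by
      have := congrArg List.length (liftWalk_edges w h)
      simpa [Walk.length_edges] using this
    rw [hnil] at hlen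
    simp at hlen
    omega
  · refine List.Nodup.of_map Subtype.val ?_
    rw [List.map_tail, liftWalk_support]
    exact hc.2

lemma liftWalk_sign (σ : Sym2 V → ℤˣ) {u v : V} (w : G.Walk u v)
    (h : ∀ x ∈ w.support, x ∈ R) :
    walkSign (fun e => σ (Sym2.map Subtype.val e)) (liftWalk w h) = walkSign σ w := by
  unfold walkSign
  rw [← liftWalk_edges w h, List.map_map]
  rfl

end Aux

/-- disjoint unions of forbidden forests, in triangle-positive
signed graphs. -/
theorem stmt9 {W1 W2 : Type} [Fintype W1] [Fintype W2]
    (F1 : SimpleGraph W1) (F2 : SimpleGraph W2) (s t : ℕ) (hs : 0 < s) (ht : 0 < t)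
    (h1 : ∀ (V : Type) [Fintype V] (G : SimpleGraph V) (σ : Sym2 V → ℤˣ),
      AllTrianglesPositive G σ → ¬ HasInducedCopy F1 G → balancedChromNum G σ ≤ s)
    (h2 : ∀ (V : Type) [Fintype V] (G : SimpleGraph V) (σ : Sym2 V → ℤˣ),
      AllTrianglesPositive G σ → ¬ HasInducedCopy F2 G → balancedChromNum G σ ≤ t) :
    ∀ (V : Type) [Fintype V] (G : SimpleGraph V) (σ : Sym2 V → ℤˣ),
      AllTrianglesPositive G σ → ¬ HasInducedCopy (disjUnion F1 F2) G →
        balancedChromNum G σ ≤ max s (Fintype.card W1 + t) := by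
  intro V _ G σ hpos hno
  classical
  refine Nat.sInf_le ?_
  show BalancedColorable G σ (max s (Fintype.card W1 + t))
  by_cases hF1 : HasInducedCopy F1 G
  swap
  · exact balancedColorable_mono
      (balancedColorable_of_le G σ (h1 V G σ hpos hF1)) (le_max_left _ _)
  obtain ⟨f, hf⟩ := hF1
  set k := Fintype.card W1 with hk
  set B : Set V := {v | ∃ a : W1, v = f a ∨ G.Adj (f a) v} with hB
  set R : Set V := Bᶜ with hR
  haveI : Fintype ↥R := Fintype.ofFinite _
  set σ' : Sym2 ↥R → ℤˣ := fun e => σ (Sym2.map Subtype.val e) with hσ'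
  have htri' : AllTrianglesPositive (G.induce R) σ' := by
    intro x y z hxy hyz hxz
    have := hpos x y z hxy hyz hxz
    simpa [hσ', Sym2.map_pair_eq] using this
  have hnoF2 : ¬ HasInducedCopy F2 (G.induce R) := by
    rintro ⟨g2, hg2⟩
    apply hno
    have hmemR : ∀ b : W2, ¬ ∃ a : W1, (g2 b : V) = f a ∨ G.Adj (f a) (g2 b : V) :=
      fun b => (g2 b).2
    refine ⟨⟨Sum.elim (fun a => f a) (fun b => (g2 b : V)), ?_⟩, ?_⟩
    · rintro (a | a) (b | b) hab <;> simp only [Sum.elim_inl, Sum.elim_inr] at hab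
      · exact congrArg Sum.inl (f.injective hab)
      · exact absurd ⟨a, Or.inl hab.symm⟩ (hmemR b)
      · exact absurd ⟨b, Or.inl hab⟩ (hmemR a)
      · exact congrArg Sum.inr (g2.injective (Subtype.ext hab))
    · rintro (a | a) (b | b)
      · exact (hf a b).trans (Iff.rfl)
      · refine iff_of_false (fun hadj => ?_) (fun hadj => hadj.elim)
        exact absurd ⟨a, Or.inr hadj⟩ (hmemR b)
      · refine iff_of_false (fun hadj => ?_) (fun hadj => hadj.elim)
        exact absurd ⟨b, Or.inr hadj.symm⟩ (hmemR a)
      · exact (hg2 a b).trans (Iff.rfl)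
  obtain ⟨g, hg⟩ := balancedColorable_of_le _ _ (h2 ↥R (G.induce R) σ' htri' hnoF2)
  set e1 := Fintype.equivFin W1 with he1
  set c : V → Fin (k + t) := fun v =>
    if h : v ∈ B then Fin.castAdd t (e1 h.choose)
    else Fin.natAdd k (g ⟨v, h⟩) with hc
  refine balancedColorable_mono ⟨c, ?_⟩ (le_max_right _ _)
  intro i
  by_cases hik : (i : ℕ) < k
  · refine isBalancedSet_mono ?_ (closedNbhd_balanced hpos (f (e1.symm ⟨(i : ℕ), hik⟩)))
    intro v hv
    simp only [Set.mem_setOf_eq] at hv ⊢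
    by_cases hvB : v ∈ B
    · rw [hc] at hv
      simp only at hv
      rw [dif_pos hvB] at hv
      have hval : (e1 hvB.choose : ℕ) = (i : ℕ) := by
        have := congrArg Fin.val hv
        simpa using this
    
      have hch : hvB.choose = e1.symm ⟨(i : ℕ), hik⟩ := by
        have : e1 hvB.choose = ⟨(i : ℕ), hik⟩ := Fin.ext hval
        rw [← this]; simp
      have hspec := hvB.choose_spec
      rw [hch] at hspec
      exact hspec
    · exfalso
      rw [hc] at hv
      simp only at hv
      rw [dif_neg hvB] at hv
      have := congrArg Fin.val hv
      simp only [Fin.coe_natAdd] at this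
      omega
  · have hit : (i : ℕ) - k < t := by have := i.isLt; omega
    intro u w hcyc hsup
    have hnotB : ∀ x ∈ w.support, x ∉ B := by
      intro x hx hxB
      have hcx := hsup x hx
      simp only [Set.mem_setOf_eq] at hcx
      rw [hc] at hcx
      simp only at hcx
      rw [dif_pos hxB] at hcx
      have := congrArg Fin.val hcx
      simp only [Fin.coe_castAdd] at this
      have := (e1 hxB.choose).isLt
      omega
    have hsupR : ∀ x ∈ w.support, x ∈ R := fun x hx => hnotB x hx
    have hgval : ∀ u' ∈ (liftWalk w hsupR).support, g u' = ⟨(i : ℕ) - k, hit⟩ := by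
      intro u' hu'
      have hmem : (u' : V) ∈ w.support := by
        rw [← liftWalk_support w hsupR]
        exact List.mem_map_of_mem (f := Subtype.val) hu'
      have hcx := hsup _ hmem
      simp only [Set.mem_setOf_eq] at hcx
      rw [hc] at hcx
      simp only at hcx
      rw [dif_neg (hnotB _ hmem)] at hcx
      have hval := congrArg Fin.val hcx
      simp only [Fin.coe_natAdd] at hval
      have : g ⟨(u' : V), hnotB _ hmem⟩ = ⟨(i : ℕ) - k, hit⟩ := by
        apply Fin.ext
        simp only
        omega
      simpa using this
    have hbal := hg ⟨(i : ℕ) - k, hit⟩ (liftWalk w hsupR)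
      (liftWalk_isCycle w hsupR hcyc) hgval
    rw [← liftWalk_sign σ w hsupR]
    exact hbal


end SignedGS
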